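/- arXiv:1806.02124 — 4 statements merged into one kernel-verified Lean document; each statement's English description precedes it below -/
import Mathlib

section
/- Let A be a unital associative algebra over ℂ, let ω : A → ℂ be a linear functional with ω(1) = 1, and let (α_t)_{t∈ℝ} be a one-parameter group of algebra automorphisms of A (α_0 = id and α_{s+t} = α_s ∘ α_t). Suppose ω satisfies the KMS condition at inverse temperature β > 0: for every a, b ∈ A there exists a function F : ℂ → ℂ which is continuous and bounded on the closed strip S_β = { z ∈ ℂ : 0 ≤ Im z ≤ β }, holomorphic on the open strip { z : 0 < Im z < β }, and satisfies F(t) = ω(a · α_t(b)) and F(t + iβ) = ω(α_t(b) · a) for all real t. Then ω is invariant under the evolution: ω(α_t(b)) = ω(b) for all t ∈ ℝ and all b ∈ A. -/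
open Complex Set intervalIntegral

private lemma not_mem_Ioo_minmax (c u : ℝ) : c ∉ Ioo (min c u) (max c u) := by
  intro h
  rcases le_total c u with h' | h'
  · rw [min_eq_left h'] at h; exact lt_irrefl c h.1
  · rw [max_eq_left h'] at h; exact lt_irrefl c h.2

private lemma not_mem_Ioo_minmax' (c u : ℝ) : c ∉ Ioo (min u c) (max u c) := by
  rw [min_comm, max_comm]; exact not_mem_Ioo_minmax c u

private lemma rect_zero (f : ℂ → ℂ) (hc : Continuous f) {c d : ℝ}
    (hdiff : ∀ z : ℂ, |z.im - c| < d → z.im ≠ c → DifferentiableAt ℂ f z)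
    (a b y₁ y₂ : ℝ) (h1 : |y₁ - c| < d) (h2 : |y₂ - c| < d)
    (hnot : c ∉ Ioo (min y₁ y₂) (max y₁ y₂)) :
    (∫ x : ℝ in a..b, f (x + y₁ * I)) - (∫ x : ℝ in a..b, f (x + y₂ * I)) +
      I • (∫ y : ℝ in y₁..y₂, f (b + y * I)) -
      I • (∫ y : ℝ in y₁..y₂, f (a + y * I)) = 0 := by
  have := Complex.integral_boundary_rect_eq_zero_of_continuousOn_of_differentiableOn f
    (⟨a, y₁⟩ : ℂ) (⟨b, y₂⟩ : ℂ) (hc.continuousOn) ?_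
  · simpa using this
  · intro w hw
    rw [Complex.mem_reProdIm] at hw
    refine (hdiff w ?_ ?_).differentiableWithinAt
    · have hw2 := hw.2
      simp only [mem_Ioo] at hw2
      rw [abs_sub_lt_iff] at h1 h2 ⊢
      rcases le_total y₁ y₂ with h' | h'
      · rw [min_eq_left h', max_eq_right h'] at hw2
        constructor <;> nlinarith [h1.1, h1.2, h2.1, h2.2, hw2.1, hw2.2]
      · rw [min_eq_right h', max_eq_left h'] at hw2
        constructor <;> nlinarith [h1.1, h1.2, h2.1, h2.2, hw2.1, hw2.2]
    · intro hwim
      exact hnot (hwim ▸ hw.2)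

private lemma intInt (f : ℂ → ℂ) (hc : Continuous f) (a y₁ y₂ : ℝ) :
    IntervalIntegrable (fun y : ℝ => f (↑a + ↑y * I)) MeasureTheory.volume y₁ y₂ :=
  (hc.comp (by continuity)).intervalIntegrable _ _

private lemma rect_zero_gen (f : ℂ → ℂ) (hc : Continuous f) {c d : ℝ} (hd : 0 < d)
    (hdiff : ∀ z : ℂ, |z.im - c| < d → z.im ≠ c → DifferentiableAt ℂ f z)
    (a b y₁ y₂ : ℝ) (h1 : |y₁ - c| < d) (h2 : |y₂ - c| < d) :
    (∫ x : ℝ in a..b, f (x + y₁ * I)) - (∫ x : ℝ in a..b, f (x + y₂ * I)) +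
      I • (∫ y : ℝ in y₁..y₂, f (b + y * I)) -
      I • (∫ y : ℝ in y₁..y₂, f (a + y * I)) = 0 := by
  have hcc : |c - c| < d := by simpa using hd
  have A1 := rect_zero f hc hdiff a b y₁ c h1 hcc (not_mem_Ioo_minmax' c y₁)
  have A2 := rect_zero f hc hdiff a b c y₂ hcc h2 (not_mem_Ioo_minmax c y₂)
  have Vb := integral_add_adjacent_intervals (a := y₁) (b := c) (c := y₂)
    (intInt f hc b y₁ c) (intInt f hc b c y₂)
  have Va := integral_add_adjacent_intervals (a := y₁) (b := c) (c := y₂)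
    (intInt f hc a y₁ c) (intInt f hc a c y₂)
  simp only [smul_eq_mul] at A1 A2 ⊢
  linear_combination A1 + A2 - I * Vb + I * Va

private lemma key_diff (f : ℂ → ℂ) (hc : Continuous f) {c d : ℝ} (hd : 0 < d)
    (hdiff : ∀ z : ℂ, |z.im - c| < d → z.im ≠ c → DifferentiableAt ℂ f z)
    (z₀ z : ℂ) (h0 : |z₀.im - c| < d) (hz : |z.im - c| < d) :
    ((∫ t in (0:ℝ)..z.re, f (↑t + ↑c * I)) + I * ∫ s in c..z.im, f (↑z.re + ↑s * I)) -
      ((∫ t in (0:ℝ)..z₀.re, f (↑t + ↑c * I)) + I * ∫ s in c..z₀.im, f (↑z₀.re + ↑s * I)) =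
    (∫ t in z₀.re..z.re, f (↑t + ↑z₀.im * I)) + I * ∫ s in z₀.im..z.im, f (↑z.re + ↑s * I) := by
  have hcc : |c - c| < d := by simpa using hd
  have R := rect_zero f hc hdiff z₀.re z.re c z₀.im hcc h0 (not_mem_Ioo_minmax c z₀.im)
  have H : (∫ t in (0:ℝ)..z.re, f (↑t + ↑c * I)) - (∫ t in (0:ℝ)..z₀.re, f (↑t + ↑c * I)) =
      ∫ t in z₀.re..z.re, f (↑t + ↑c * I) :=
    integral_interval_sub_left ((hc.comp (by continuity)).intervalIntegrable _ _)
      ((hc.comp (by continuity)).intervalIntegrable _ _)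
  have V := integral_add_adjacent_intervals (a := c) (b := z₀.im) (c := z.im)
    (intInt f hc z.re c z₀.im) (intInt f hc z.re z₀.im z.im)
  simp only [smul_eq_mul] at R
  linear_combination H + R - I * V

private lemma morera_strip (f : ℂ → ℂ) (hc : Continuous f) {c d : ℝ} (hd : 0 < d)
    (hdiff : ∀ z : ℂ, |z.im - c| < d → z.im ≠ c → DifferentiableAt ℂ f z) :
    ∀ z : ℂ, |z.im - c| < d → DifferentiableAt ℂ f z := by
  set P : ℂ → ℂ := fun z =>
    (∫ t in (0:ℝ)..z.re, f (↑t + ↑c * I)) + I * ∫ s in c..z.im, f (↑z.re + ↑s * I) with hP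
  have hU : IsOpen {z : ℂ | |z.im - c| < d} := by
    have : {z : ℂ | |z.im - c| < d} = Complex.im ⁻¹' (Metric.ball c d) := by
      ext w; simp [Metric.mem_ball, Real.dist_eq]
    rw [this]
    exact Metric.isOpen_ball.preimage Complex.continuous_im
  have hPderiv : ∀ z₀ : ℂ, |z₀.im - c| < d → HasDerivAt P (f z₀) z₀ := by
    intro z₀ h0
    rw [hasDerivAt_iff_isLittleO, Asymptotics.isLittleO_iff]
    intro ε hε
    obtain ⟨δ, hδ, hδ'⟩ := Metric.continuousAt_iff.1 (hc.continuousAt (x := z₀)) (ε/2) (by linarith)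
    have hr : 0 < min (δ/2) (d - |z₀.im - c|) := lt_min (by linarith) (by linarith)
    filter_upwards [Metric.ball_mem_nhds z₀ hr] with z hzball
    have hdz : dist z z₀ < min (δ/2) (d - |z₀.im - c|) := Metric.mem_ball.1 hzball
    have habs : ‖z - z₀‖ < min (δ/2) (d - |z₀.im - c|) := by
      rwa [Complex.dist_eq] at hdz
    have hz : |z.im - c| < d := by
      have h1 : |z.im - z₀.im| ≤ ‖z - z₀‖ := by
        simpa using Complex.abs_im_le_norm (z - z₀)
      calc |z.im - c| ≤ |z.im - z₀.im| + |z₀.im - c| := abs_sub_le _ _ _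
        _ < (d - |z₀.im - c|) + |z₀.im - c| :=
            add_lt_add_left (h1.trans_lt (habs.trans_le (min_le_right _ _))) _
        _ = d := by ring
    have KD := key_diff f hc hd hdiff z₀ z h0 hz
    have hre : |z.re - z₀.re| ≤ ‖z - z₀‖ := by
      simpa using Complex.abs_re_le_norm (z - z₀)
    have him : |z.im - z₀.im| ≤ ‖z - z₀‖ := by
      simpa using Complex.abs_im_le_norm (z - z₀)
    -- rewrite P z - P z₀ - (z - z₀) * f z₀ as sum of two integrals of differences
    have hsub : z - z₀ = (↑(z.re - z₀.re) : ℂ) + ↑(z.im - z₀.im) * I := by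
      apply Complex.ext <;> simp
    have I1 : IntervalIntegrable (fun t : ℝ => f (↑t + ↑z₀.im * I)) MeasureTheory.volume z₀.re z.re :=
      (hc.comp (by continuity)).intervalIntegrable _ _
    have I1' : IntervalIntegrable (fun _ : ℝ => f z₀) MeasureTheory.volume z₀.re z.re :=
      intervalIntegrable_const
    have I2 := intInt f hc z.re z₀.im z.im
    have I2' : IntervalIntegrable (fun _ : ℝ => f z₀) MeasureTheory.volume z₀.im z.im :=
      intervalIntegrable_const
    have E : P z - P z₀ - (z - z₀) • f z₀ =
        (∫ t in z₀.re..z.re, (f (↑t + ↑z₀.im * I) - f z₀)) +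
          I * ∫ s in z₀.im..z.im, (f (↑z.re + ↑s * I) - f z₀) := by
      rw [intervalIntegral.integral_sub I1 I1', intervalIntegral.integral_sub I2 I2']
      simp only [intervalIntegral.integral_const, Complex.real_smul, smul_eq_mul, hsub]
      push_cast
      linear_combination KD
    rw [E]
    -- estimates
    have B1 : ‖∫ t in z₀.re..z.re, (f (↑t + ↑z₀.im * I) - f z₀)‖ ≤ (ε/2) * |z.re - z₀.re| := by
      apply intervalIntegral.norm_integral_le_of_norm_le_const
      intro x hx
      have hx' : |x - z₀.re| ≤ |z.re - z₀.re| := by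
        rw [abs_le]
        rcases Set.mem_uIoc.1 hx with h | h <;> constructor <;>
          nlinarith [abs_nonneg (z.re - z₀.re),
            le_abs_self (z.re - z₀.re), neg_abs_le (z.re - z₀.re), h.1, h.2]
      have hdist : dist (↑x + ↑z₀.im * I) z₀ < δ := by
        rw [Complex.dist_eq]
        have : ‖(↑x + ↑z₀.im * I - z₀ : ℂ)‖ = |x - z₀.re| := by
          have : (↑x + ↑z₀.im * I - z₀ : ℂ) = ((x - z₀.re : ℝ) : ℂ) := by
            apply Complex.ext <;> simp
          rw [this, Complex.norm_real, Real.norm_eq_abs]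
        rw [this]
        calc |x - z₀.re| ≤ |z.re - z₀.re| := hx'
          _ ≤ ‖z - z₀‖ := hre
          _ < δ/2 := habs.trans_le (min_le_left _ _)
          _ ≤ δ := by linarith
      have := hδ' hdist
      rw [Complex.dist_eq] at this
      exact le_of_lt this
    have B2 : ‖∫ s in z₀.im..z.im, (f (↑z.re + ↑s * I) - f z₀)‖ ≤ (ε/2) * |z.im - z₀.im| := by
      apply intervalIntegral.norm_integral_le_of_norm_le_const
      intro s hs
      have hs' : |s - z₀.im| ≤ |z.im - z₀.im| := by
        rw [abs_le]
        rcases Set.mem_uIoc.1 hs with h | h <;> constructor <;>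
          nlinarith [abs_nonneg (z.im - z₀.im),
            le_abs_self (z.im - z₀.im), neg_abs_le (z.im - z₀.im), h.1, h.2]
      have hdist : dist (↑z.re + ↑s * I) z₀ < δ := by
        rw [Complex.dist_eq]
        have heq : (↑z.re + ↑s * I - z₀ : ℂ) = ((z.re - z₀.re : ℝ) : ℂ) + ((s - z₀.im : ℝ) : ℂ) * I := by
          apply Complex.ext <;> simp
        calc ‖(↑z.re + ↑s * I - z₀ : ℂ)‖
            = ‖((z.re - z₀.re : ℝ) : ℂ) + ((s - z₀.im : ℝ) : ℂ) * I‖ := by rw [heq]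
          _ ≤ ‖((z.re - z₀.re : ℝ) : ℂ)‖ + ‖((s - z₀.im : ℝ) : ℂ) * I‖ :=
              norm_add_le _ _
          _ = |z.re - z₀.re| + |s - z₀.im| := by
              rw [norm_mul, Complex.norm_I, mul_one, Complex.norm_real, Complex.norm_real, Real.norm_eq_abs, Real.norm_eq_abs]
          _ ≤ ‖z - z₀‖ + ‖z - z₀‖ :=
              add_le_add hre (hs'.trans him)
          _ < δ/2 + δ/2 := by
              have := habs.trans_le (min_le_left _ _); exact add_lt_add this this
          _ = δ := by ring
      have := hδ' hdist
      rw [Complex.dist_eq] at this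
      exact le_of_lt this
    calc ‖(∫ t in z₀.re..z.re, (f (↑t + ↑z₀.im * I) - f z₀)) +
          I * ∫ s in z₀.im..z.im, (f (↑z.re + ↑s * I) - f z₀)‖
        ≤ ‖∫ t in z₀.re..z.re, (f (↑t + ↑z₀.im * I) - f z₀)‖ +
          ‖I * ∫ s in z₀.im..z.im, (f (↑z.re + ↑s * I) - f z₀)‖ := norm_add_le _ _
      _ = ‖∫ t in z₀.re..z.re, (f (↑t + ↑z₀.im * I) - f z₀)‖ +
          ‖∫ s in z₀.im..z.im, (f (↑z.re + ↑s * I) - f z₀)‖ := by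
            rw [norm_mul, Complex.norm_I, one_mul]
      _ ≤ (ε/2) * |z.re - z₀.re| + (ε/2) * |z.im - z₀.im| := add_le_add B1 B2
      _ ≤ (ε/2) * ‖z - z₀‖ + (ε/2) * ‖z - z₀‖ := by
            have h2 : (0:ℝ) ≤ ε/2 := by linarith
            exact add_le_add (mul_le_mul_of_nonneg_left hre h2)
              (mul_le_mul_of_nonneg_left him h2)
      _ = ε * ‖z - z₀‖ := by ring
  -- conclude
  intro z hz
  have hPdiff : DifferentiableOn ℂ P {z : ℂ | |z.im - c| < d} := fun w hw =>
    ((hPderiv w hw).differentiableAt).differentiableWithinAt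
  have han := (hPdiff.analyticOnNhd hU).deriv
  have hdP : DifferentiableAt ℂ (deriv P) z := (han z hz).differentiableAt
  refine hdP.congr_of_eventuallyEq ?_
  filter_upwards [hU.mem_nhds hz] with w hw
  exact ((hPderiv w hw).deriv).symm

/-- A KMS state at inverse temperature `β > 0` is invariant under the evolution. -/
theorem kms_state_invariant
    {A : Type*} [Ring A] [Algebra ℂ A]
    (ω : A →ₗ[ℂ] ℂ) (hω1 : ω 1 = 1)
    (α : ℝ → (A ≃ₐ[ℂ] A))
    (hα0 : ∀ a : A, α 0 a = a)
    (hαadd : ∀ s t : ℝ, ∀ a : A, α (s + t) a = α s (α t a))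
    (β : ℝ) (hβ : 0 < β)
    (hKMS : ∀ a b : A, ∃ F : ℂ → ℂ,
      ContinuousOn F {z : ℂ | 0 ≤ z.im ∧ z.im ≤ β} ∧
      (∃ C : ℝ, ∀ z ∈ {z : ℂ | 0 ≤ z.im ∧ z.im ≤ β}, ‖F z‖ ≤ C) ∧
      (∀ z : ℂ, 0 < z.im → z.im < β → DifferentiableAt ℂ F z) ∧
      (∀ t : ℝ, F t = ω (a * α t b)) ∧
      (∀ t : ℝ, F (t + Complex.I * β) = ω (α t b * a))) :
    ∀ (t : ℝ) (b : A), ω (α t b) = ω b := by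
  intro t b
  obtain ⟨F, hFc, ⟨C, hFb⟩, hFd, hF0, hFβ⟩ := hKMS 1 b
  have hper : ∀ s : ℝ, F (↑s + Complex.I * ↑β) = F ↑s := by
    intro s; rw [hFβ s, hF0 s, mul_one, one_mul]
  have flo : ∀ (j : ℤ) (y : ℝ), (j:ℝ) * β ≤ y → y < ((j:ℝ)+1) * β → ⌊y / β⌋ = j := by
    intro j y h1 h2
    rw [Int.floor_eq_iff]
    refine ⟨(le_div_iff₀ hβ).2 h1, ?_⟩
    rw [div_lt_iff₀ hβ]
    push_cast
    exact h2
  have hopen : ∀ a b : ℝ, IsOpen {w : ℂ | a < w.im ∧ w.im < b} := by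
    intro a b
    exact isOpen_Ioo.preimage Complex.continuous_im
  set G : ℂ → ℂ := fun z => F (z - (⌊z.im / β⌋ : ℂ) * ↑β * Complex.I) with hGdef
  have him : ∀ (j : ℤ) (z : ℂ), (z - (j:ℂ) * ↑β * Complex.I).im = z.im - (j:ℝ)*β := by
    intro j z; simp
  have floor_le : ∀ z : ℂ, ((⌊z.im/β⌋:ℤ):ℝ)*β ≤ z.im := by
    intro z
    have := Int.sub_floor_div_mul_nonneg z.im hβ
    linarith
  have floor_lt : ∀ z : ℂ, z.im < (((⌊z.im/β⌋:ℤ):ℝ)+1)*β := by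
    intro z
    have := Int.sub_floor_div_mul_lt z.im hβ
    nlinarith
  have hmem : ∀ z : ℂ, (z - ((⌊z.im/β⌋:ℤ):ℂ) * ↑β * Complex.I) ∈ {w : ℂ | 0 ≤ w.im ∧ w.im ≤ β} := by
    intro z
    rw [Set.mem_setOf_eq, him]
    constructor
    · have := Int.sub_floor_div_mul_nonneg z.im hβ; linarith
    · have := Int.sub_floor_div_mul_lt z.im hβ; linarith
  have hseam : ∀ (j : ℤ) (z : ℂ), (j:ℝ)*β ≤ z.im → z.im ≤ ((j:ℝ)+1)*β →
      G z = F (z - (j:ℂ) * ↑β * Complex.I) := by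
    intro j z h1 h2
    rcases lt_or_eq_of_le h2 with hlt | heq
    · have hf : ⌊z.im/β⌋ = j := flo j _ h1 hlt
      rw [hGdef]
      simp only [hf]
    · have hf : ⌊z.im/β⌋ = j + 1 := by
        refine flo (j+1) _ (by push_cast; linarith) (by push_cast; nlinarith)
      rw [hGdef]
      simp only [hf]
      have e1 : z - ((j+1 : ℤ):ℂ) * ↑β * Complex.I = ((z.re : ℝ) : ℂ) := by
        apply Complex.ext
        · simp
        · push_cast; simp; nlinarith
      have e2 : z - (j:ℂ) * ↑β * Complex.I = ↑z.re + Complex.I * ↑β := by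
        apply Complex.ext
        · simp
        · simp; nlinarith
      rw [e1, e2, hper z.re]
  have hFat : ∀ w : ℂ, 0 < w.im → w.im < β → ContinuousAt F w := by
    intro w h1 h2
    exact hFc.continuousAt (mem_nhds_iff.2
      ⟨{w : ℂ | 0 < w.im ∧ w.im < β}, fun u hu => ⟨hu.1.le, hu.2.le⟩, hopen 0 β, ⟨h1, h2⟩⟩)
  have hGdiff_off : ∀ z : ℂ, ((⌊z.im/β⌋:ℤ):ℝ)*β < z.im → DifferentiableAt ℂ G z := by
    intro z hlt
    set j := ⌊z.im/β⌋ with hj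
    have hub : z.im < ((j:ℝ)+1)*β := floor_lt z
    have hV : {w : ℂ | (j:ℝ)*β < w.im ∧ w.im < ((j:ℝ)+1)*β} ∈ nhds z :=
      (hopen _ _).mem_nhds ⟨hlt, hub⟩
    have hdF : DifferentiableAt ℂ (fun w => F (w - (j:ℂ) * ↑β * Complex.I)) z := by
      have h1 : 0 < (z - (j:ℂ) * ↑β * Complex.I).im := by rw [him]; linarith
      have h2 : (z - (j:ℂ) * ↑β * Complex.I).im < β := by rw [him]; nlinarith
      exact (hFd _ h1 h2).comp z (differentiableAt_id.sub_const _)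
    refine hdF.congr_of_eventuallyEq ?_
    filter_upwards [hV] with w hw
    exact hseam j w hw.1.le hw.2.le
  have hGcont : Continuous G := by
    rw [continuous_iff_continuousAt]
    intro z
    set j := ⌊z.im/β⌋ with hj
    rcases eq_or_lt_of_le (floor_le z) with heq | hlt
    · -- z on the seam: z.im = j * β
      set T₁ := {w : ℂ | ((j:ℝ)-1)*β ≤ w.im ∧ w.im ≤ (j:ℝ)*β} with hT₁
      set T₂ := {w : ℂ | (j:ℝ)*β ≤ w.im ∧ w.im ≤ ((j:ℝ)+1)*β} with hT₂
      have cw1 : ContinuousWithinAt G T₁ z := by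
        have base : ContinuousWithinAt (fun w => F (w - ((j-1 : ℤ):ℂ) * ↑β * Complex.I)) T₁ z := by
          refine (hFc.comp ((continuous_sub_right _).continuousOn) ?_).continuousWithinAt ?_
          · intro w hw
            rw [Set.mem_setOf_eq, him]
            push_cast
            exact ⟨by linarith [hw.1], by linarith [hw.2]⟩
          · exact ⟨by nlinarith, by linarith⟩
        refine base.congr ?_ ?_
        · intro w hw
          exact hseam (j-1) w (by push_cast; linarith [hw.1]) (by push_cast; linarith [hw.2])
        · exact hseam (j-1) z (by push_cast; nlinarith) (by push_cast; linarith)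
      have cw2 : ContinuousWithinAt G T₂ z := by
        have base : ContinuousWithinAt (fun w => F (w - (j:ℂ) * ↑β * Complex.I)) T₂ z := by
          refine (hFc.comp ((continuous_sub_right _).continuousOn) ?_).continuousWithinAt ?_
          · intro w hw
            rw [Set.mem_setOf_eq, him]
            exact ⟨by linarith [hw.1], by linarith [hw.2]⟩
          · exact ⟨by linarith, by nlinarith⟩
        refine base.congr ?_ ?_
        · intro w hw
          exact hseam j w hw.1 hw.2
        · exact hseam j z (by linarith) (by nlinarith)
      refine (cw1.union cw2).continuousAt (mem_nhds_iff.2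
        ⟨{w : ℂ | ((j:ℝ)-1)*β < w.im ∧ w.im < ((j:ℝ)+1)*β}, ?_, hopen _ _, ?_⟩)
      · intro w hw
        rcases le_total w.im ((j:ℝ)*β) with h' | h'
        · exact Or.inl ⟨hw.1.le, h'⟩
        · exact Or.inr ⟨h', hw.2.le⟩
      · exact ⟨by nlinarith, by nlinarith⟩
    · -- interior
      have hub : z.im < ((j:ℝ)+1)*β := floor_lt z
      have hV : {w : ℂ | (j:ℝ)*β < w.im ∧ w.im < ((j:ℝ)+1)*β} ∈ nhds z :=
        (hopen _ _).mem_nhds ⟨hlt, hub⟩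
      have base : ContinuousAt (fun w => F (w - (j:ℂ) * ↑β * Complex.I)) z := by
        have h1 : 0 < (z - (j:ℂ) * ↑β * Complex.I).im := by rw [him]; linarith
        have h2 : (z - (j:ℂ) * ↑β * Complex.I).im < β := by rw [him]; nlinarith
        exact ContinuousAt.comp (x := z) (hFat _ h1 h2) ((continuous_sub_right _).continuousAt)
      refine base.congr ?_
      filter_upwards [hV] with w hw
      exact (hseam j w hw.1.le hw.2.le).symm
  have hGdiff : Differentiable ℂ G := by
    intro z
    rcases eq_or_lt_of_le (floor_le z) with heq | hlt
    · set j := ⌊z.im/β⌋ with hj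
      refine morera_strip G hGcont (c := (j:ℝ)*β) (d := β) hβ ?_ z ?_
      · intro w hw1 hw2
        rw [abs_sub_lt_iff] at hw1
        rcases lt_or_gt_of_ne hw2 with hlt' | hgt
        · have hf : ⌊w.im/β⌋ = j - 1 :=
            flo (j-1) _ (by push_cast; linarith [hw1.2]) (by push_cast; linarith)
          apply hGdiff_off
          rw [hf]
          push_cast
          linarith [hw1.2]
        · have hf : ⌊w.im/β⌋ = j := flo j _ hgt.le (by linarith [hw1.1])
          apply hGdiff_off
          rw [hf]
          exact hgt
      · rw [← heq]
        simpa using hβ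
    · exact hGdiff_off z hlt
  have hGbd : Bornology.IsBounded (Set.range G) := by
    rw [isBounded_iff_forall_norm_le]
    exact ⟨C, by rintro x ⟨z, rfl⟩; exact hFb _ (hmem z)⟩
  have hGreal : ∀ s : ℝ, G ↑s = F ↑s := by
    intro s
    rw [hGdef]
    norm_num
  have hL : G ↑t = G 0 := hGdiff.apply_eq_apply_of_bounded hGbd ↑t 0
  have h1 : F ↑t = ω (α t b) := by rw [hF0 t, one_mul]
  have h2 : F 0 = ω b := by
    have e := hF0 0
    rw [one_mul, hα0] at e
    simpa using e
  have h0 : G 0 = ω b := by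
    have e := hGreal 0
    rw [Complex.ofReal_zero] at e
    rw [e, h2]
  rw [← h1, ← hGreal t, hL, h0]
end

section
/- Let β > 0 and let g : ℝ → ℂ be a Schwartz function. Define F(z) = ∫_ℝ g(x) · exp(i·z·x) · (exp(−β·x) + 1)⁻¹ dx for z in the closed strip S_β = { z ∈ ℂ : 0 ≤ Im z ≤ β }. Then: (i) F is continuous on S_β and satisfies |F(z)| ≤ ∫_ℝ |g(x)| dx for all z ∈ S_β; (ii) F is complex differentiable at every point of the open strip { z : 0 < Im z < β }; (iii) for every real t, F(t + iβ) = ∫_ℝ g(x) · exp(i·t·x) · (exp(β·x) + 1)⁻¹ dx. -/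
open MeasureTheory


lemma fermi_pos (β x : ℝ) : 0 < Real.exp (-β*x) + 1 := by positivity

lemma fermi_ne (β x : ℝ) : ((Real.exp (-β*x) + 1 : ℝ) : ℂ) ≠ 0 := by
  exact_mod_cast (fermi_pos β x).ne'

lemma norm_factor (β : ℝ) (z : ℂ) (x : ℝ) :
    ‖Complex.exp (Complex.I * z * x) * ((Real.exp (-β*x) + 1 : ℝ) : ℂ)⁻¹‖
      = Real.exp (-(z.im) * x) / (Real.exp (-β*x) + 1) := by
  rw [norm_mul, norm_inv, Complex.norm_exp,
    Complex.norm_real, Real.norm_eq_abs, abs_of_pos (fermi_pos β x)]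
  congr 2
  simp [Complex.mul_re, Complex.mul_im]

lemma strip_bound (β : ℝ) {y : ℝ} (hy0 : 0 ≤ y) (hyβ : y ≤ β) (x : ℝ) :
    Real.exp (-y*x) / (Real.exp (-β*x) + 1) ≤ 1 := by
  rw [div_le_one (fermi_pos β x)]
  rcases le_or_gt 0 x with hx | hx
  · have h1 : Real.exp (-y*x) ≤ 1 := Real.exp_le_one_iff.mpr (by nlinarith)
    have h2 := Real.exp_pos (-β*x)
    linarith
  · have h1 : Real.exp (-y*x) ≤ Real.exp (-β*x) := Real.exp_le_exp.mpr (by nlinarith)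
    linarith

-- continuity of the integrand in x for fixed z
lemma cont_integrand (β : ℝ) (g : SchwartzMap ℝ ℂ) (z : ℂ) :
    Continuous (fun x : ℝ => (g x) * Complex.exp (Complex.I * z * x)
      * ((Real.exp (-β * x) + 1 : ℝ) : ℂ)⁻¹) := by
  apply Continuous.mul
  · exact g.continuous.mul (Complex.continuous_exp.comp (by fun_prop))
  · apply Continuous.inv₀
    · fun_prop
    · intro x; exact fermi_ne β x

lemma norm_integrand_le (β : ℝ) (g : SchwartzMap ℝ ℂ) {z : ℂ}
    (h0 : 0 ≤ z.im) (hb : z.im ≤ β) (x : ℝ) :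
    ‖(g x) * Complex.exp (Complex.I * z * x) * ((Real.exp (-β * x) + 1 : ℝ) : ℂ)⁻¹‖ ≤ ‖g x‖ := by
  rw [mul_assoc, norm_mul, norm_factor]
  calc ‖g x‖ * (Real.exp (-(z.im) * x) / (Real.exp (-β*x) + 1))
      ≤ ‖g x‖ * 1 := by
        gcongr
        exact strip_bound β h0 hb x
    _ = ‖g x‖ := mul_one _

lemma integrable_integrand (β : ℝ) (g : SchwartzMap ℝ ℂ) {z : ℂ}
    (h0 : 0 ≤ z.im) (hb : z.im ≤ β) :
    Integrable (fun x : ℝ => (g x) * Complex.exp (Complex.I * z * x)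
      * ((Real.exp (-β * x) + 1 : ℝ) : ℂ)⁻¹) := by
  refine (g.integrable.norm.mono' ((cont_integrand β g z).aestronglyMeasurable) ?_)
  filter_upwards with x
  exact norm_integrand_le β g h0 hb x

/-- Smeared verification of the KMS property for the fermionic two-point function:
the function `F(z) = ∫ g(x) e^{izx} (e^{−βx}+1)^{−1} dx` is continuous and bounded on the
closed strip `0 ≤ Im z ≤ β`, holomorphic in the open strip, and its boundary value at
`Im z = β` carries the opposite Fermi factor. -/
theorem kms_fermi_two_point_analytic
    (β : ℝ) (hβ : 0 < β) (g : SchwartzMap ℝ ℂ)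
    (F : ℂ → ℂ)
    (hF : ∀ z : ℂ, F z =
      ∫ x : ℝ, g x * Complex.exp (Complex.I * z * x) * ((Real.exp (-β * x) + 1 : ℝ) : ℂ)⁻¹) :
    ContinuousOn F {z : ℂ | 0 ≤ z.im ∧ z.im ≤ β} ∧
    (∀ z ∈ {z : ℂ | 0 ≤ z.im ∧ z.im ≤ β}, ‖F z‖ ≤ ∫ x : ℝ, ‖g x‖) ∧
    (∀ z : ℂ, 0 < z.im → z.im < β → DifferentiableAt ℂ F z) ∧
    (∀ t : ℝ, F (t + Complex.I * β) =
      ∫ x : ℝ, g x * Complex.exp (Complex.I * t * x) * ((Real.exp (β * x) + 1 : ℝ) : ℂ)⁻¹) := by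
  have hFeq : F = fun z => ∫ x : ℝ, g x * Complex.exp (Complex.I * z * x)
      * ((Real.exp (-β * x) + 1 : ℝ) : ℂ)⁻¹ := funext hF
  refine ⟨?_, ?_, ?_, ?_⟩
  · -- continuity
    intro z hz
    rw [hFeq]
    refine tendsto_integral_filter_of_dominated_convergence (fun x => ‖g x‖)
      (Filter.Eventually.of_forall fun w => (cont_integrand β g w).aestronglyMeasurable)
      ?_ g.integrable.norm ?_
    · filter_upwards [self_mem_nhdsWithin] with w hw
      exact ae_of_all _ fun x => norm_integrand_le β g hw.1 hw.2 x
    · refine ae_of_all _ fun x => ?_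
      have hc : Continuous fun w : ℂ => (g x : ℂ) * Complex.exp (Complex.I * w * x)
          * ((Real.exp (-β * x) + 1 : ℝ) : ℂ)⁻¹ := by
        exact ((continuous_const.mul (Complex.continuous_exp.comp (by fun_prop))).mul
          continuous_const)
      exact (hc.tendsto z).mono_left nhdsWithin_le_nhds
  · -- bound
    intro z hz
    rw [hF]
    exact norm_integral_le_of_norm_le g.integrable.norm
      (ae_of_all _ fun x => norm_integrand_le β g hz.1 hz.2 x)
  · -- differentiability
    intro z h1 h2
    rw [hFeq]
    set ε := min z.im (β - z.im) with hε
    have hεpos : 0 < ε := lt_min h1 (by linarith)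
    have main := hasDerivAt_integral_of_dominated_loc_of_deriv_le (μ := volume)
      (F := fun w x => (g x : ℂ) * Complex.exp (Complex.I * w * x)
        * ((Real.exp (-β * x) + 1 : ℝ) : ℂ)⁻¹)
      (F' := fun w x => (g x : ℂ) * (Complex.I * x)
        * (Complex.exp (Complex.I * w * x) * ((Real.exp (-β * x) + 1 : ℝ) : ℂ)⁻¹))
      (x₀ := z) (bound := fun x => ‖x‖ ^ 1 * ‖g x‖) (Metric.ball_mem_nhds z hεpos)
      (Filter.Eventually.of_forall fun w => (cont_integrand β g w).aestronglyMeasurable)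
      (integrable_integrand β g h1.le h2.le)
      ?_ ?_ (g.integrable_pow_mul volume 1) ?_
    · exact main.2.differentiableAt
    · -- measurability of F' z
      have hlin : Continuous fun x : ℝ => Complex.I * z * (x : ℂ) := by fun_prop
      have hinv : Continuous fun x : ℝ => ((Real.exp (-β * x) + 1 : ℝ) : ℂ)⁻¹ :=
        Continuous.inv₀ (by fun_prop) (fun x => fermi_ne β x)
      exact (((g.continuous.mul (by fun_prop)).mul
        ((Complex.continuous_exp.comp hlin).mul hinv))).aestronglyMeasurable
    · -- bound on F'
      refine ae_of_all _ fun x w hw => ?_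
      have him : |w.im - z.im| < ε := by
        have h3 : |(w - z).im| ≤ ‖w - z‖ := Complex.abs_im_le_norm _
        have h4 : ‖w - z‖ < ε := by
          simpa [Complex.dist_eq] using (Metric.mem_ball.mp hw)
        simpa [Complex.sub_im] using h3.trans_lt h4
      have hw0 : 0 ≤ w.im := by
        have := abs_lt.mp him
        have := min_le_left z.im (β - z.im)
        rw [hε] at him
        linarith [abs_lt.mp him |>.1, min_le_left z.im (β - z.im)]
      have hwβ : w.im ≤ β := by
        linarith [abs_lt.mp him |>.2, min_le_right z.im (β - z.im)]
      rw [norm_mul, norm_mul, norm_factor]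
      have h5 : ‖Complex.I * (x:ℂ)‖ = ‖x‖ := by
        simp
      rw [h5]
      have h6 := strip_bound β hw0 hwβ x
      have h7 : (0:ℝ) ≤ ‖g x‖ * ‖x‖ := by positivity
      calc ‖g x‖ * ‖x‖ * (Real.exp (-(w.im) * x) / (Real.exp (-β*x) + 1))
          ≤ ‖g x‖ * ‖x‖ * 1 := by gcongr
        _ = ‖x‖ ^ 1 * ‖g x‖ := by ring
    · -- HasDerivAt
      refine ae_of_all _ fun x w hw => ?_
      have hd : HasDerivAt (fun w : ℂ => Complex.exp (Complex.I * w * x))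
          (Complex.exp (Complex.I * w * x) * (Complex.I * x)) w := by
        have h1 : HasDerivAt (fun w : ℂ => Complex.I * w * x) (Complex.I * x) w := by
          simpa using (((hasDerivAt_id w).const_mul Complex.I).mul_const (x : ℂ))
        exact h1.cexp
      have := (hd.const_mul (g x : ℂ)).mul_const (((Real.exp (-β * x) + 1 : ℝ) : ℂ)⁻¹)
      exact this.congr_deriv (by ring)
  · -- boundary value
    intro t
    rw [hF]
    congr 1
    funext x
    have e1 : Complex.I * ((t:ℂ) + Complex.I * β) * x
        = Complex.I * t * x + ((-(β*x) : ℝ) : ℂ) := by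
      push_cast
      linear_combination ((β : ℂ) * (x : ℂ)) * Complex.I_mul_I
    have h2 : Complex.exp (Complex.I * ((t:ℂ) + Complex.I * β) * x)
        = Complex.exp (Complex.I * t * x) * ((Real.exp (-(β*x)) : ℝ) : ℂ) := by
      rw [e1, Complex.exp_add, Complex.ofReal_exp]
    have hd := fermi_pos β x
    have hd2 : 0 < Real.exp (β*x) + 1 := by positivity
    have h3 : Real.exp (-(β*x)) * Real.exp (β*x) = 1 := by
      rw [← Real.exp_add]; simp
    have hr : Real.exp (-(β*x)) * (Real.exp (-β*x)+1)⁻¹ = (Real.exp (β*x)+1)⁻¹ := by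
      rw [neg_mul] at hd ⊢
      field_simp
      nlinarith
    have hr' : ((Real.exp (-(β*x)) : ℝ) : ℂ) * ((Real.exp (-β*x)+1 : ℝ) : ℂ)⁻¹
        = ((Real.exp (β*x)+1 : ℝ) : ℂ)⁻¹ := by
      rw [← Complex.ofReal_inv, ← Complex.ofReal_inv, ← Complex.ofReal_mul,
        Complex.ofReal_inj]
      exact hr
    rw [h2]
    linear_combination (g x * Complex.exp (Complex.I * (t:ℂ) * x)) * hr'
end

section
/- Let μ be a σ-finite measure on ℝ, let β > 0, and let ξ : ℝ → ℂ be measurable with ∫ |ξ(λ)|² dμ(λ) < ∞ and ∫ exp(−β·λ)·|ξ(λ)|² dμ(λ) < ∞. Then there exists a map Φ from the closed strip S_{β/2} = { z ∈ ℂ : 0 ≤ Im z ≤ β/2 } to the Hilbert space L²(μ) such that: (i) for every z ∈ S_{β/2}, Φ(z) is (the class of) the function λ ↦ exp(i·z·λ)·ξ(λ); (ii) Φ is continuous on S_{β/2} and bounded, with ‖Φ(z)‖²_{L²(μ)} ≤ ∫ (1 + exp(−β·λ))·|ξ(λ)|² dμ(λ) for all z ∈ S_{β/2}; (iii) Φ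 is complex differentiable (as an L²(μ)-valued map) at every point of the open strip { z : 0 < Im z < β/2 }. -/
open MeasureTheory

private lemma sq_mul_exp_neg_le {s x : ℝ} (hs : 0 < s) (hx : 0 ≤ x) :
    x ^ 2 * Real.exp (-(s * x)) ≤ 4 / s ^ 2 := by
  have h1 : s * x / 2 + 1 ≤ Real.exp (s * x / 2) := Real.add_one_le_exp _
  have h2 : (s * x / 2) ^ 2 ≤ Real.exp (s * x / 2) ^ 2 :=
    pow_le_pow_left₀ (by positivity) (by linarith) 2
  have h3 : Real.exp (s * x / 2) ^ 2 = Real.exp (s * x) := by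
    rw [sq, ← Real.exp_add]; ring_nf
  have h4 : Real.exp (-(s * x)) * Real.exp (s * x) = 1 := by
    rw [← Real.exp_add]; simp
  have h5 := Real.exp_pos (-(s * x))
  have h6 : s ^ 2 * x ^ 2 / 4 ≤ Real.exp (s * x) := by nlinarith
  rw [le_div_iff₀ (by positivity : (0:ℝ) < s ^ 2)]
  nlinarith [mul_le_mul_of_nonneg_right h6 h5.le]

private lemma quart_mul_exp_neg_le {s x : ℝ} (hs : 0 < s) (hx : 0 ≤ x) :
    x ^ 4 * Real.exp (-(s * x)) ≤ 256 / s ^ 4 := by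
  have h := sq_mul_exp_neg_le (s := s / 2) (x := x) (by linarith) hx
  have h' : x ^ 2 * Real.exp (-(s / 2 * x)) ≤ 16 / s ^ 2 := by
    have : (4:ℝ) / (s / 2) ^ 2 = 16 / s ^ 2 := by field_simp; ring
    linarith [this ▸ h]
  have e2 : Real.exp (-(s / 2 * x)) ^ 2 = Real.exp (-(s * x)) := by
    rw [sq, ← Real.exp_add]; ring_nf
  calc x ^ 4 * Real.exp (-(s * x)) = (x ^ 2 * Real.exp (-(s / 2 * x))) ^ 2 := by
        rw [mul_pow, e2]; ring
    _ ≤ (16 / s ^ 2) ^ 2 := pow_le_pow_left₀ (by positivity) h' 2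
    _ = 256 / s ^ 4 := by rw [div_pow]; norm_num [← pow_mul]

private lemma exp_taylor2 (u : ℂ) :
    ‖Complex.exp u - 1 - u‖ ≤ 3 * ‖u‖ ^ 2 * Real.exp ‖u‖ := by
  have hexp1 : (1:ℝ) ≤ Real.exp ‖u‖ := Real.one_le_exp (norm_nonneg u)
  rcases le_or_gt ‖u‖ 1 with h | h
  · have h1 : ‖Complex.exp u - 1 - u‖ ≤ ‖u‖ ^ 2 :=
      Complex.norm_exp_sub_one_sub_id_le h
    calc ‖Complex.exp u - 1 - u‖ ≤ ‖u‖ ^ 2 := h1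
      _ = ‖u‖ ^ 2 * 1 := by ring
      _ ≤ 3 * ‖u‖ ^ 2 * Real.exp ‖u‖ := by nlinarith [sq_nonneg ‖u‖]
  · have hexp : ‖Complex.exp u‖ ≤ Real.exp ‖u‖ := by
      rw [Complex.norm_exp]
      exact Real.exp_le_exp.2 (Complex.re_le_norm u)
    have h2 : ‖Complex.exp u - 1 - u‖ ≤ ‖Complex.exp u‖ + 1 + ‖u‖ := by
      calc ‖Complex.exp u - 1 - u‖ ≤ ‖Complex.exp u - 1‖ + ‖u‖ := norm_sub_le _ _
        _ ≤ ‖Complex.exp u‖ + ‖(1:ℂ)‖ + ‖u‖ := by linarith [norm_sub_le (Complex.exp u) 1]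
        _ = ‖Complex.exp u‖ + 1 + ‖u‖ := by norm_num
    have hu2 : 1 ≤ ‖u‖ ^ 2 := by nlinarith
    have a1 : ‖Complex.exp u‖ ≤ ‖u‖ ^ 2 * Real.exp ‖u‖ := by nlinarith [Real.exp_pos ‖u‖]
    have a2 : (1:ℝ) ≤ ‖u‖ ^ 2 * Real.exp ‖u‖ := by nlinarith [Real.exp_pos ‖u‖]
    have a3 : ‖u‖ ≤ ‖u‖ ^ 2 * Real.exp ‖u‖ := by nlinarith [Real.exp_pos ‖u‖]
    linarith

private lemma strip_exp_le {β t l : ℝ} (ht : 0 ≤ t) (htβ : 2 * t ≤ β) :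
    Real.exp (-(2 * t) * l) ≤ 1 + Real.exp (-β * l) := by
  rcases le_or_gt 0 l with hl | hl
  · have h1 : Real.exp (-(2 * t) * l) ≤ 1 := Real.exp_le_one_iff.2 (by nlinarith)
    linarith [Real.exp_pos (-β * l)]
  · have h1 : Real.exp (-(2 * t) * l) ≤ Real.exp (-β * l) := Real.exp_le_exp.2 (by nlinarith)
    linarith

private lemma sq_strip_bound {β t : ℝ} (s : ℝ) (hs : 0 < s) (hst : s ≤ 2 * t)
    (hsb : s ≤ β - 2 * t) (l : ℝ) :
    l ^ 2 * Real.exp (-(2 * t) * l) ≤ 4 / s ^ 2 * (1 + Real.exp (-β * l)) := by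
  have hb := Real.exp_pos (-β * l)
  rcases le_or_gt 0 l with hl | hl
  · have h1 : Real.exp (-(2 * t) * l) ≤ Real.exp (-(s * l)) := Real.exp_le_exp.2 (by nlinarith)
    have h2 : l ^ 2 * Real.exp (-(s * l)) ≤ 4 / s ^ 2 := sq_mul_exp_neg_le hs hl
    have h3 : (0:ℝ) ≤ 4 / s ^ 2 := by positivity
    nlinarith [mul_le_mul_of_nonneg_left h1 (sq_nonneg l)]
  · have h1 : Real.exp (-(2 * t) * l) ≤ Real.exp (-(s * (-l))) * Real.exp (-β * l) := by
      rw [← Real.exp_add]; exact Real.exp_le_exp.2 (by nlinarith)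
    have h2 : (-l) ^ 2 * Real.exp (-(s * (-l))) ≤ 4 / s ^ 2 := sq_mul_exp_neg_le hs (by linarith)
    have h3 : (0:ℝ) ≤ 4 / s ^ 2 := by positivity
    have h4 := Real.exp_pos (-(s * (-l)))
    nlinarith [mul_le_mul_of_nonneg_left h1 (sq_nonneg l),
      mul_le_mul_of_nonneg_right h2 hb.le]

private lemma quart_strip_bound {β t : ℝ} (s : ℝ) (hs : 0 < s) (hst : 2 * s ≤ 2 * t)
    (hsb : 2 * s ≤ β - 2 * t) (l : ℝ) :
    l ^ 4 * Real.exp (s * |l| - 2 * t * l) ≤ 256 / s ^ 4 * (1 + Real.exp (-β * l)) := by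
  have hb := Real.exp_pos (-β * l)
  rcases le_or_gt 0 l with hl | hl
  · rw [abs_of_nonneg hl]
    have h1 : Real.exp (s * l - 2 * t * l) ≤ Real.exp (-(s * l)) := Real.exp_le_exp.2 (by nlinarith)
    have h2 : l ^ 4 * Real.exp (-(s * l)) ≤ 256 / s ^ 4 := quart_mul_exp_neg_le hs hl
    have h3 : (0:ℝ) ≤ 256 / s ^ 4 := by positivity
    nlinarith [mul_le_mul_of_nonneg_left h1 (by positivity : (0:ℝ) ≤ l ^ 4)]
  · rw [abs_of_neg hl]
    have h1 : Real.exp (s * (-l) - 2 * t * l) ≤ Real.exp (-(s * (-l))) * Real.exp (-β * l) := by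
      rw [← Real.exp_add]; exact Real.exp_le_exp.2 (by nlinarith)
    have h2 : (-l) ^ 4 * Real.exp (-(s * (-l))) ≤ 256 / s ^ 4 := quart_mul_exp_neg_le hs (by linarith)
    have h3 : (0:ℝ) ≤ 256 / s ^ 4 := by positivity
    have h4 := Real.exp_pos (-(s * (-l)))
    have h5 : (0:ℝ) ≤ l ^ 4 := by positivity
    nlinarith [mul_le_mul_of_nonneg_left h1 h5, mul_le_mul_of_nonneg_right h2 hb.le]

private lemma norm_toLp_sq {μ : Measure ℝ} {f : ℝ → ℂ} (hf : MemLp f 2 μ) :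
    ‖hf.toLp f‖ ^ 2 = ∫ a, ‖f a‖ ^ 2 ∂μ := by
  have hint : Integrable (fun a => ‖f a‖ ^ 2) μ :=
    (memLp_two_iff_integrable_sq_norm hf.aestronglyMeasurable).1 hf
  have hintc : Integrable (fun a => (inner ℂ (f a) (f a) : ℂ)) μ := by
    have : (fun a => (inner ℂ (f a) (f a) : ℂ)) = fun a => ((‖f a‖ ^ 2 : ℝ) : ℂ) := by
      funext a
      rw [inner_self_eq_norm_sq_to_K]
      norm_cast
    rw [this]
    exact hint.ofReal
  calc ‖hf.toLp f‖ ^ 2 = RCLike.re (inner ℂ (hf.toLp f) (hf.toLp f) : ℂ) :=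
        (inner_self_eq_norm_sq _).symm
    _ = RCLike.re (∫ a, (inner ℂ (f a) (f a) : ℂ) ∂μ) := by
        rw [L2.inner_def]
        congr 1
        apply integral_congr_ae
        filter_upwards [hf.coeFn_toLp] with a ha
        rw [ha]
    _ = ∫ a, RCLike.re (inner ℂ (f a) (f a) : ℂ) ∂μ := (integral_re hintc).symm
    _ = ∫ a, ‖f a‖ ^ 2 ∂μ := by
        apply integral_congr_ae
        filter_upwards with a
        rw [inner_self_eq_norm_sq]

set_option maxHeartbeats 1600000 in
/-- Spectral form of Pedersen Prop. 8.14.2: under the KMS-type integrability conditions on `ξ`,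
the `L²(μ)`-valued map `z ↦ (λ ↦ e^{izλ} ξ(λ))` is continuous and bounded on the closed strip
`0 ≤ Im z ≤ β/2` and holomorphic in its interior. -/
theorem kms_orbit_map_analytic_strip
    (μ : Measure ℝ) [SigmaFinite μ] (β : ℝ) (hβ : 0 < β)
    (ξ : ℝ → ℂ) (hmeas : Measurable ξ)
    (hL2 : Integrable (fun l : ℝ => ‖ξ l‖ ^ 2) μ)
    (hL2β : Integrable (fun l : ℝ => Real.exp (-β * l) * ‖ξ l‖ ^ 2) μ) :
    ∃ Φ : ℂ → Lp ℂ 2 μ,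
      (∀ z ∈ {z : ℂ | 0 ≤ z.im ∧ z.im ≤ β / 2},
        (Φ z : ℝ → ℂ) =ᵐ[μ] fun l : ℝ => Complex.exp (Complex.I * z * l) * ξ l) ∧
      ContinuousOn Φ {z : ℂ | 0 ≤ z.im ∧ z.im ≤ β / 2} ∧
      (∀ z ∈ {z : ℂ | 0 ≤ z.im ∧ z.im ≤ β / 2},
        ‖Φ z‖ ^ 2 ≤ ∫ l : ℝ, (1 + Real.exp (-β * l)) * ‖ξ l‖ ^ 2 ∂μ) ∧
      (∀ z : ℂ, 0 < z.im → z.im < β / 2 → DifferentiableAt ℂ Φ z) := by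
  classical
  set S : Set ℂ := {z : ℂ | 0 ≤ z.im ∧ z.im ≤ β / 2} with hS
  set f : ℂ → ℝ → ℂ := fun z l => Complex.exp (Complex.I * z * l) * ξ l with hf
  set g : ℝ → ℝ := fun l => (1 + Real.exp (-β * l)) * ‖ξ l‖ ^ 2 with hgdef
  have hgnn : ∀ l, 0 ≤ g l := by
    intro l
    simp only [hgdef]
    positivity
  have hg : Integrable g μ := by
    refine (hL2.add hL2β).congr (Filter.Eventually.of_forall fun l => ?_)
    simp only [hgdef, Pi.add_apply]
    ring
  have hfm : ∀ z : ℂ, Measurable (f z) := fun z =>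
    ((measurable_const.mul Complex.measurable_ofReal).cexp).mul hmeas
  have hnorm : ∀ (z : ℂ) (l : ℝ), ‖f z l‖ = Real.exp (-z.im * l) * ‖ξ l‖ := by
    intro z l
    simp only [hf]
    rw [norm_mul]
    congr 1
    rw [Complex.norm_exp]
    congr 1
    simp [Complex.mul_re]
  have hnormsq : ∀ (z : ℂ) (l : ℝ), ‖f z l‖ ^ 2 = Real.exp (-(2 * z.im) * l) * ‖ξ l‖ ^ 2 := by
    intro z l
    rw [hnorm, mul_pow, sq (Real.exp _), ← Real.exp_add]
    ring_nf
  have hfg : ∀ z ∈ S, ∀ l, ‖f z l‖ ^ 2 ≤ g l := by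
    intro z hz l
    rw [hnormsq]
    have h1 := strip_exp_le (β := β) (t := z.im) (l := l) hz.1 (by linarith [hz.2])
    simp only [hgdef]
    exact mul_le_mul_of_nonneg_right h1 (by positivity)
  have hmem : ∀ z ∈ S, MemLp (f z) 2 μ := by
    intro z hz
    refine (memLp_two_iff_integrable_sq_norm (hfm z).aestronglyMeasurable).2 ?_
    refine hg.mono' (((hfm z).norm.pow_const 2).aestronglyMeasurable)
      (Filter.Eventually.of_forall fun l => ?_)
    rw [Real.norm_eq_abs, abs_of_nonneg (by positivity)]
    exact hfg z hz l
  set Φ : ℂ → Lp ℂ 2 μ := fun z => if h : MemLp (f z) 2 μ then h.toLp (f z) else 0 with hΦdef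
  have hΦ : ∀ z (hz : z ∈ S), Φ z = (hmem z hz).toLp (f z) := by
    intro z hz
    simp only [hΦdef]
    rw [dif_pos (hmem z hz)]
  refine ⟨Φ, ?_, ?_, ?_, ?_⟩
  · -- (i) a.e. representation
    intro z hz
    rw [hΦ z hz]
    exact (hmem z hz).coeFn_toLp
  · -- (ii) continuity
    intro z hz
    have key : Filter.Tendsto (fun w => ∫ l, ‖f w l - f z l‖ ^ 2 ∂μ)
        (nhdsWithin z S) (nhds 0) := by
      have h0 : (0:ℝ) = ∫ _ : ℝ, (0:ℝ) ∂μ := by simp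
      rw [h0]
      apply tendsto_integral_filter_of_dominated_convergence (fun l => 4 * g l)
      · exact Filter.Eventually.of_forall fun w =>
          (((hfm w).sub (hfm z)).norm.pow_const 2).aestronglyMeasurable
      · filter_upwards [self_mem_nhdsWithin] with w hw
        refine Filter.Eventually.of_forall fun l => ?_
        rw [Real.norm_eq_abs, abs_of_nonneg (by positivity)]
        have h1 := hfg w hw l
        have h2 := hfg z hz l
        nlinarith [norm_sub_le (f w l) (f z l), norm_nonneg (f w l), norm_nonneg (f z l),
          sq_nonneg (‖f w l‖ - ‖f z l‖), hgnn l,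
          pow_le_pow_left₀ (norm_nonneg (f w l - f z l)) (norm_sub_le (f w l) (f z l)) 2]
      · exact hg.const_mul 4
      · refine Filter.Eventually.of_forall fun l => ?_
        have hc : Continuous fun w : ℂ => ‖f w l - f z l‖ ^ 2 := by
          have hc0 : Continuous fun w : ℂ => f w l := by
            simp only [hf]
            exact (((continuous_const.mul continuous_id).mul continuous_const).cexp).mul
              continuous_const
          exact ((hc0.sub continuous_const).norm).pow 2
        have h := (hc.tendsto z).mono_left (nhdsWithin_le_nhds (s := S))
        simpa using h
    have hroot : Filter.Tendsto (fun w => Real.sqrt (∫ l, ‖f w l - f z l‖ ^ 2 ∂μ))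
        (nhdsWithin z S) (nhds 0) := by
      have := (Real.continuous_sqrt.tendsto 0).comp key
      simpa [Function.comp_def] using this
    have heq : ∀ᶠ w in nhdsWithin z S,
        ‖Φ w - Φ z‖ = Real.sqrt (∫ l, ‖f w l - f z l‖ ^ 2 ∂μ) := by
      filter_upwards [self_mem_nhdsWithin] with w hw
      have hsub : MemLp (f w - f z) 2 μ := (hmem w hw).sub (hmem z hz)
      have h1 : Φ w - Φ z = hsub.toLp (f w - f z) := by
        rw [hΦ w hw, hΦ z hz, MemLp.toLp_sub]
      have h2 := norm_toLp_sq hsub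
      simp only [Pi.sub_apply] at h2
      rw [h1, ← Real.sqrt_sq (norm_nonneg _), h2]
    have hnrm : Filter.Tendsto (fun w => ‖Φ w - Φ z‖) (nhdsWithin z S) (nhds 0) :=
      hroot.congr' (by filter_upwards [heq] with w h using h.symm)
    exact tendsto_iff_norm_sub_tendsto_zero.2 hnrm
  · -- (iii) bound
    intro z hz
    rw [hΦ z hz, norm_toLp_sq (hmem z hz)]
    exact integral_mono ((memLp_two_iff_integrable_sq_norm (hfm z).aestronglyMeasurable).1
      (hmem z hz)) hg (fun l => hfg z hz l)
  · -- (iv) differentiability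
    intro z ht0 htβ
    have hzS : z ∈ S := ⟨ht0.le, htβ.le⟩
    set s : ℝ := min z.im (β / 2 - z.im) with hsdef
    have hs : 0 < s := lt_min ht0 (by linarith)
    have hst : s ≤ z.im := min_le_left _ _
    have hsb : s ≤ β / 2 - z.im := min_le_right _ _
    set fd : ℝ → ℂ := fun l => Complex.I * l * f z l with hfddef
    have hfdm : Measurable fd := (measurable_const.mul Complex.measurable_ofReal).mul (hfm z)
    have hfdnormsq : ∀ l, ‖fd l‖ ^ 2
        = l ^ 2 * Real.exp (-(2 * z.im) * l) * ‖ξ l‖ ^ 2 := by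
      intro l
      simp only [hfddef]
      rw [norm_mul, norm_mul, Complex.norm_I, one_mul, Complex.norm_real, Real.norm_eq_abs,
        mul_pow, sq_abs, hnormsq]
      ring
    have hmemd : MemLp fd 2 μ := by
      refine (memLp_two_iff_integrable_sq_norm hfdm.aestronglyMeasurable).2 ?_
      refine (hg.const_mul (4 / s ^ 2)).mono' ((hfdm.norm.pow_const 2).aestronglyMeasurable)
        (Filter.Eventually.of_forall fun l => ?_)
      rw [Real.norm_eq_abs, abs_of_nonneg (by positivity), hfdnormsq]
      have h1 := sq_strip_bound (β := β) (t := z.im) s hs (by linarith) (by linarith) l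
      calc l ^ 2 * Real.exp (-(2 * z.im) * l) * ‖ξ l‖ ^ 2
          ≤ 4 / s ^ 2 * (1 + Real.exp (-β * l)) * ‖ξ l‖ ^ 2 :=
            mul_le_mul_of_nonneg_right h1 (by positivity)
        _ = 4 / s ^ 2 * g l := by simp only [hgdef]; ring
    set D : Lp ℂ 2 μ := hmemd.toLp fd with hDdef
    set C : ℝ := 256 / s ^ 4 with hCdef
    have hC0 : 0 < C := by positivity
    have hIg : 0 ≤ ∫ l, g l ∂μ := integral_nonneg hgnn
    set M : ℝ := Real.sqrt (C * ∫ l, g l ∂μ) with hMdef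
    have hM0 : 0 ≤ M := Real.sqrt_nonneg _
    have hkey : ∀ w : ℂ, ‖w - z‖ < s / 2 →
        ‖Φ w - Φ z - (w - z) • D‖ ≤ 3 * M * ‖w - z‖ ^ 2 := by
      intro w hw
      have him : |w.im - z.im| ≤ ‖w - z‖ := by
        have := Complex.abs_im_le_norm (w - z)
        rwa [Complex.sub_im] at this
      have hwS : w ∈ S := by
        obtain ⟨ha, hb⟩ := abs_le.1 him
        constructor <;> [nlinarith; nlinarith]
      have hpt : ∀ l : ℝ, ‖f w l - f z l - (w - z) * fd l‖ ^ 2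
          ≤ 9 * ‖w - z‖ ^ 4 * (C * g l) := by
        intro l
        have hEeq : f w l - f z l - (w - z) * fd l
            = f z l * (Complex.exp (Complex.I * (w - z) * l) - 1 - Complex.I * (w - z) * l) := by
          simp only [hf, hfddef]
          rw [show Complex.I * w * (l:ℂ) = Complex.I * z * l + Complex.I * (w - z) * l by ring,
            Complex.exp_add]
          ring
        have hu : ‖Complex.I * (w - z) * (l:ℂ)‖ = ‖w - z‖ * |l| := by
          simp [Complex.norm_real, Real.norm_eq_abs]
        have hT := exp_taylor2 (Complex.I * (w - z) * l)
        rw [hu] at hT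
        have habs4 : |l| ^ 4 = l ^ 4 := by
          rw [show (4:ℕ) = 2 * 2 from rfl, pow_mul, pow_mul, sq_abs]
        have hexps : Real.exp (‖w - z‖ * |l|) ^ 2 * Real.exp (-(2 * z.im) * l)
            ≤ Real.exp (s * |l| - 2 * z.im * l) := by
          rw [sq, ← Real.exp_add, ← Real.exp_add]
          refine Real.exp_le_exp.2 ?_
          have : ‖w - z‖ * |l| + ‖w - z‖ * |l| ≤ s * |l| := by
            nlinarith [abs_nonneg l, hw.le]
          linarith
        have hquart := quart_strip_bound (β := β) (t := z.im) s hs (by linarith)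
          (by linarith) l
        calc ‖f w l - f z l - (w - z) * fd l‖ ^ 2
            = ‖f z l‖ ^ 2
              * ‖Complex.exp (Complex.I * (w - z) * l) - 1 - Complex.I * (w - z) * l‖ ^ 2 := by
              rw [hEeq, norm_mul, mul_pow]
          _ ≤ ‖f z l‖ ^ 2 * (3 * (‖w - z‖ * |l|) ^ 2 * Real.exp (‖w - z‖ * |l|)) ^ 2 :=
              mul_le_mul_of_nonneg_left (pow_le_pow_left₀ (norm_nonneg _) hT 2) (by positivity)
          _ = 9 * ‖w - z‖ ^ 4 * (l ^ 4
              * (Real.exp (‖w - z‖ * |l|) ^ 2 * Real.exp (-(2 * z.im) * l)) * ‖ξ l‖ ^ 2) := by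
              rw [hnormsq, ← habs4]
              ring
          _ ≤ 9 * ‖w - z‖ ^ 4 * (l ^ 4 * Real.exp (s * |l| - 2 * z.im * l) * ‖ξ l‖ ^ 2) := by
              refine mul_le_mul_of_nonneg_left ?_ (by positivity)
              exact mul_le_mul_of_nonneg_right
                (mul_le_mul_of_nonneg_left hexps (by positivity)) (by positivity)
          _ ≤ 9 * ‖w - z‖ ^ 4 * (C * (1 + Real.exp (-β * l)) * ‖ξ l‖ ^ 2) := by
              refine mul_le_mul_of_nonneg_left ?_ (by positivity)
              exact mul_le_mul_of_nonneg_right hquart (by positivity)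
          _ = 9 * ‖w - z‖ ^ 4 * (C * g l) := by
              simp only [hgdef]; ring
      have hE : MemLp (f w - f z - (w - z) • fd) 2 μ :=
        ((hmem w hwS).sub (hmem z hzS)).sub (hmemd.const_smul (w - z))
      have h1 : Φ w - Φ z - (w - z) • D = hE.toLp (f w - f z - (w - z) • fd) := by
        rw [hΦ w hwS, hΦ z hzS, hDdef]
        rfl
      have h2 : ‖Φ w - Φ z - (w - z) • D‖ ^ 2 ≤ 9 * ‖w - z‖ ^ 4 * (C * ∫ l, g l ∂μ) := by
        rw [h1, norm_toLp_sq hE]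
        have hint1 : Integrable (fun l => ‖(f w - f z - (w - z) • fd) l‖ ^ 2) μ :=
          (memLp_two_iff_integrable_sq_norm hE.aestronglyMeasurable).1 hE
        calc ∫ l, ‖(f w - f z - (w - z) • fd) l‖ ^ 2 ∂μ
            ≤ ∫ l, 9 * ‖w - z‖ ^ 4 * (C * g l) ∂μ := by
              refine integral_mono hint1 ((hg.const_mul C).const_mul (9 * ‖w - z‖ ^ 4)) ?_
              intro l
              simpa only [Pi.sub_apply, Pi.smul_apply, smul_eq_mul] using hpt l
          _ = 9 * ‖w - z‖ ^ 4 * (C * ∫ l, g l ∂μ) := by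
              rw [integral_const_mul, integral_const_mul]
      have h3 : (3 * M * ‖w - z‖ ^ 2) ^ 2 = 9 * ‖w - z‖ ^ 4 * (C * ∫ l, g l ∂μ) := by
        rw [hMdef, mul_pow, mul_pow, Real.sq_sqrt (by positivity)]
        ring
      have h4 : ‖Φ w - Φ z - (w - z) • D‖ ^ 2 ≤ (3 * M * ‖w - z‖ ^ 2) ^ 2 := by
        rw [h3]; exact h2
      have h5 := Real.sqrt_le_sqrt h4
      rwa [Real.sqrt_sq (norm_nonneg _), Real.sqrt_sq (by positivity)] at h5
    have hD : HasDerivAt Φ D z := by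
      rw [hasDerivAt_iff_isLittleO, Asymptotics.isLittleO_iff]
      intro c hc
      have hr : 0 < min (s / 2) (c / (3 * M + 1)) := lt_min (by positivity) (by positivity)
      filter_upwards [Metric.ball_mem_nhds z hr] with w hw
      rw [Metric.mem_ball, dist_eq_norm] at hw
      have hw1 : ‖w - z‖ < s / 2 := lt_of_lt_of_le hw (min_le_left _ _)
      have hw2 : ‖w - z‖ < c / (3 * M + 1) := lt_of_lt_of_le hw (min_le_right _ _)
      have hk := hkey w hw1
      have hrc : c / (3 * M + 1) * (3 * M + 1) = c := div_mul_cancel₀ _ (by positivity)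
      have h3M1 : (0:ℝ) < 3 * M + 1 := by positivity
      have hw3 : ‖w - z‖ * (3 * M + 1) ≤ c := by
        nlinarith [mul_lt_mul_of_pos_right hw2 h3M1]
      calc ‖Φ w - Φ z - (w - z) • D‖ ≤ 3 * M * ‖w - z‖ ^ 2 := hk
        _ ≤ c * ‖w - z‖ := by
            nlinarith [mul_le_mul_of_nonneg_right hw3 (norm_nonneg (w - z)),
              norm_nonneg (w - z), hM0, sq_nonneg ‖w - z‖]
    exact hD.differentiableAt
end

section
/- In the setting of the unitary implementation: H a complex Hilbert space, V a complex vector space, j : V → H ℂ-linear with dense range, T : ℝ → GL(V) a one-parameter group of ℂ-linear bijections preserving the induced inner product (⟨ j(T_t v), j(T_t w) ⟩ = ⟨ j(v), j(w) ⟩ for all t, v, w), and U_t the unitary group on H with U_t(j(v)) = j(T_t v). If in addition the map t ↦ ⟨ j(v), j(T_t w) ⟩ is continuous on ℝ for every v, w ∈ V, then the unitary group is strongly continuous: for every x ∈ H, the map t ↦ U_t x is continuous from ℝ to H. -/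
/-- If the implemented unitary one-parameter group is weakly continuous on the dense range of
`j`, then it is strongly continuous: every orbit map `t ↦ U_t x` is norm continuous. -/
theorem unitary_group_strongly_continuous
    {H : Type*} [NormedAddCommGroup H] [InnerProductSpace ℂ H] [CompleteSpace H]
    {V : Type*} [AddCommGroup V] [Module ℂ V]
    (j : V →ₗ[ℂ] H) (hdense : DenseRange j)
    (T : ℝ → (V ≃ₗ[ℂ] V))
    (hT0 : ∀ v : V, T 0 v = v)
    (hTadd : ∀ s t : ℝ, ∀ v : V, T (s + t) v = T s (T t v))
    (hinner : ∀ (t : ℝ) (v w : V),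
      (inner ℂ (j (T t v)) (j (T t w)) : ℂ) = inner ℂ (j v) (j w))
    (U : ℝ → (H ≃ₗᵢ[ℂ] H))
    (hU0 : ∀ x : H, U 0 x = x)
    (hUadd : ∀ s t : ℝ, ∀ x : H, U (s + t) x = U s (U t x))
    (hUj : ∀ (t : ℝ) (v : V), U t (j v) = j (T t v))
    (hweak : ∀ v w : V, Continuous fun t : ℝ => (inner ℂ (j v) (j (T t w)) : ℂ)) :
    ∀ x : H, Continuous fun t : ℝ => U t x := by
  -- Step 1: continuity at 0 on the range of j.
  have hv : ∀ v : V, Filter.Tendsto (fun t : ℝ => U t (j v)) (nhds 0) (nhds (j v)) := by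
    intro v
    have hsq : Filter.Tendsto (fun t : ℝ => ‖U t (j v) - j v‖ ^ 2) (nhds 0) (nhds 0) := by
      have heq : (fun t : ℝ => ‖U t (j v) - j v‖ ^ 2)
          = fun t : ℝ => 2 * ‖j v‖ ^ 2 - 2 * Complex.re (inner ℂ (j v) (j (T t v))) := by
        funext t
        have h1 : ‖U t (j v) - j v‖ ^ 2
            = ‖U t (j v)‖ ^ 2 - 2 * Complex.re (inner ℂ (U t (j v)) (j v) : ℂ) + ‖j v‖ ^ 2 :=
          @norm_sub_sq ℂ _ _ _ _ _ _
        have h2 : ‖U t (j v)‖ = ‖j v‖ := (U t).norm_map _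
        have h3 : (inner ℂ (U t (j v)) (j v) : ℂ)
            = starRingEnd ℂ (inner ℂ (j v) (j (T t v))) := by
          rw [hUj, ← inner_conj_symm]
        rw [h1, h2, h3, Complex.conj_re]
        ring
      rw [heq]
      have hc : Continuous fun t : ℝ =>
          2 * ‖j v‖ ^ 2 - 2 * Complex.re (inner ℂ (j v) (j (T t v))) := by
        fun_prop (disch := exact hweak v v)
      have := hc.tendsto 0
      convert this using 2
      have h0 : (inner ℂ (j v) (j (T 0 v)) : ℂ) = inner ℂ (j v) (j v) := by rw [hT0]
      have h0' : (inner ℂ (j v) (j v) : ℂ).re = ‖j v‖ ^ 2 :=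
        inner_self_eq_norm_sq (𝕜 := ℂ) (j v)
      rw [h0, h0']
      ring
    rw [tendsto_iff_norm_sub_tendsto_zero]
    have h01 : Filter.Tendsto (fun t : ℝ => ‖U t (j v) - j v‖) (nhds 0) (nhds (Real.sqrt 0)) := by
      have hcomp : Filter.Tendsto (fun t : ℝ => Real.sqrt (‖U t (j v) - j v‖ ^ 2))
          (nhds 0) (nhds (Real.sqrt 0)) := (Real.continuous_sqrt.tendsto 0).comp hsq
      exact hcomp.congr fun t => Real.sqrt_sq (norm_nonneg _)
    simpa using h01
  -- Step 2: continuity at 0 for all x, by density.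
  have key : ∀ x : H, Filter.Tendsto (fun t : ℝ => U t x) (nhds 0) (nhds x) := by
    intro x
    rw [Metric.tendsto_nhds]
    intro ε hε
    obtain ⟨v, hvx⟩ := hdense.exists_dist_lt x (by positivity : (0:ℝ) < ε / 3)
    have hev : ∀ᶠ t : ℝ in nhds 0, dist (U t (j v)) (j v) < ε / 3 :=
      Metric.tendsto_nhds.mp (hv v) (ε / 3) (by positivity)
    filter_upwards [hev] with t ht
    have h1 : dist (U t x) (U t (j v)) = dist x (j v) := (U t).isometry.dist_eq _ _
    calc dist (U t x) x ≤ dist (U t x) (U t (j v)) + dist (U t (j v)) (j v) + dist (j v) x :=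
          dist_triangle4 _ _ _ _
      _ < ε / 3 + ε / 3 + ε / 3 := by
          rw [h1, dist_comm (j v) x]
          have := hvx
          rw [dist_comm] at this ⊢
          linarith [this, ht]
      _ = ε := by ring
  -- Step 3: continuity everywhere via the group law.
  intro x
  rw [continuous_iff_continuousAt]
  intro t₀
  have heq : (fun t : ℝ => (U t x : H)) = fun t : ℝ => U t₀ (U (t - t₀) x) := by
    funext t
    rw [← hUadd, add_sub_cancel]
  rw [heq]
  have hsub : Filter.Tendsto (fun t : ℝ => t - t₀) (nhds t₀) (nhds 0) := by
    have := (continuous_sub_right t₀).tendsto t₀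
    rwa [sub_self] at this
  have h1 : Filter.Tendsto (fun t : ℝ => U (t - t₀) x) (nhds t₀) (nhds x) :=
    (key x).comp hsub
  have h2 : Filter.Tendsto (fun t : ℝ => U t₀ (U (t - t₀) x)) (nhds t₀) (nhds (U t₀ x)) :=
    ((U t₀).continuous.tendsto x).comp h1
  show Filter.Tendsto _ (nhds t₀) (nhds (U t₀ (U (t₀ - t₀) x)))
  rw [sub_self, hU0]
  exact h2
end
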